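/- arXiv:2103.13765 — 4 statements merged into one kernel-verified Lean document; each statement's English description precedes it below -/
import Mathlib

section
/- Let R be a commutative ring and S a commutative R-algebra that is faithfully flat as an R-module. Let M be a finitely generated R-module such that S ⊗_R M is finitely presented as an S-module. Then M is finitely presented as an R-module. -/
open TensorProduct

/-- Finiteness descends along a faithfully flat algebra. -/
lemma finite_descends_of_faithfullyFlat
    (R S N : Type*) [CommRing R] [CommRing S] [Algebra R S]
    [Module.FaithfullyFlat R S]
    [AddCommGroup N] [Module R N]
    (h : Module.Finite S (S ⊗[R] N)) :
    Module.Finite R N := by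
  classical
  obtain ⟨T, hT⟩ := h.fg_top
  -- decompose each generator as a finite sum of pure tensors
  have hdec : ∀ t : S ⊗[R] N, ∃ F : Finset (S × N),
      t = ∑ p ∈ F, p.1 ⊗ₜ[R] p.2 := fun t => TensorProduct.exists_finset t
  choose F hF using hdec
  set u : Finset N := T.biUnion (fun t => (F t).image Prod.snd) with hu
  set N' : Submodule R N := Submodule.span R (u : Set N) with hN'
  -- the base change of the quotient map kills all generators
  have hzero : ∀ t ∈ T, (N'.mkQ.baseChange S) t = 0 := by
    intro t ht
    rw [hF t, map_sum]
    refine Finset.sum_eq_zero fun p hp => ?_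
    have hpN' : p.2 ∈ N' := by
      apply Submodule.subset_span
      simp only [hu, Finset.coe_biUnion, Set.mem_iUnion, Finset.coe_image]
      exact ⟨t, ht, Set.mem_image_of_mem _ hp⟩
    have h0 : (Submodule.Quotient.mk p.2 : N ⧸ N') = 0 :=
      (Submodule.Quotient.mk_eq_zero N').mpr hpN'
    rw [LinearMap.baseChange_tmul, Submodule.mkQ_apply, h0, tmul_zero]
  have hsurj : Function.Surjective (N'.mkQ.baseChange S) :=
    LinearMap.lTensor_surjective S (Submodule.mkQ_surjective N')
  have hrange : LinearMap.range (N'.mkQ.baseChange S) = ⊥ := by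
    rw [LinearMap.range_eq_map, ← hT, Submodule.map_span, Submodule.span_eq_bot]
    rintro x ⟨t, ht, rfl⟩
    exact hzero t ht
  have hsub : Subsingleton (S ⊗[R] (N ⧸ N')) := by
    refine subsingleton_iff_forall_eq 0 |>.mpr fun x => ?_
    obtain ⟨y, rfl⟩ := hsurj x
    have : (N'.mkQ.baseChange S) y ∈ LinearMap.range (N'.mkQ.baseChange S) :=
      ⟨y, rfl⟩
    rw [hrange] at this
    simpa using this
  have : Subsingleton (N ⧸ N') :=
    Module.FaithfullyFlat.lTensor_reflects_triviality R S (N ⧸ N')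
  have hNtop : N' = ⊤ := Submodule.eq_top_iff'.mpr fun x => by
    have := Submodule.Quotient.mk_eq_zero N' (x := x)
    rw [← this]
    exact Subsingleton.elim _ _
  have : (⊤ : Submodule R N).FG := hNtop ▸ ⟨u, hN'.symm⟩
  exact ⟨this⟩

/-- Let `R` be a commutative ring and `S` a commutative `R`-algebra that is
faithfully flat as an `R`-module.  Let `M` be a finitely generated `R`-module such that
`S ⊗[R] M` is finitely presented as an `S`-module.  Then `M` is finitely presented as an
`R`-module. -/
theorem finitePresentation_descends_of_faithfullyFlat
    (R S M : Type*) [CommRing R] [CommRing S] [Algebra R S]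
    [Module.FaithfullyFlat R S]
    [AddCommGroup M] [Module R M] [Module.Finite R M]
    (h : Module.FinitePresentation S (S ⊗[R] M)) :
    Module.FinitePresentation R M := by
  classical
  obtain ⟨n, f, hf⟩ := Module.Finite.exists_fin' R M
  apply Module.finitePresentation_of_free_of_surjective f hf
  -- goal : (LinearMap.ker f).FG
  set K := LinearMap.ker f with hK
  -- base change of f
  have hfexact : Function.Exact (K.subtype.baseChange S) (f.baseChange S) :=
    lTensor_exact S f.exact_subtype_ker_map hf
  have hSsurj : Function.Surjective (f.baseChange S) :=
    LinearMap.lTensor_surjective S hf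
  haveI : Module.Finite S (S ⊗[R] (Fin n → R)) := inferInstance
  have hkerfg : (LinearMap.ker (f.baseChange S)).FG :=
    Module.FinitePresentation.fg_ker (f.baseChange S) hSsurj
  rw [LinearMap.exact_iff] at hfexact
  rw [hfexact] at hkerfg
  -- the base change of the inclusion is injective, so S ⊗ K ≅ its range
  have hinj : Function.Injective (K.subtype.baseChange S) :=
    Module.Flat.lTensor_preserves_injective_linearMap K.subtype K.injective_subtype
  have hfinrange : Module.Finite S (LinearMap.range (K.subtype.baseChange S)) :=
    Module.Finite.iff_fg.mpr hkerfg
  have e : (S ⊗[R] K) ≃ₗ[S] LinearMap.range (K.subtype.baseChange S) :=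
    LinearEquiv.ofInjective _ hinj
  haveI : Module.Finite S (S ⊗[R] K) := Module.Finite.equiv e.symm
  have : Module.Finite R K := finite_descends_of_faithfullyFlat R S K inferInstance
  exact (Submodule.fg_top K).mp this.fg_top
end

section
/- Let F be a field, u, v ∈ Fˣ with u of infinite order in Fˣ, t' = diag(u, v, 1) ∈ GL₃(F), and let G = ⟨t', U₃'⟩ be the subgroup of GL₃(F) generated by t' together with U₃'. Then U₃' is a normal subgroup of G, and every element of G can be written uniquely in the form w · (t')^m with w ∈ U₃' and m ∈ ℤ. -/
open Matrix

noncomputable section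

variable (F : Type*) [Field F]

/-- The matrix unit with a `1` in position `(1,3)` (indices `0`, `2`). -/
def E13 : Matrix (Fin 3) (Fin 3) F := Matrix.single 0 2 1

/-- The matrix unit with a `1` in position `(2,3)` (indices `1`, `2`). -/
def E23 : Matrix (Fin 3) (Fin 3) F := Matrix.single 1 2 1

/-- The subgroup `U₃' ≤ GL₃(F)` of matrices `1 + a • E₁₃ + b • E₂₃`, i.e. upper unitriangular
matrices with `(1,2)`-entry zero. -/
def U3' : Subgroup (GL (Fin 3) F) where
  carrier := {g | ∃ a b : F, (g : Matrix (Fin 3) (Fin 3) F) = 1 + a • E13 F + b • E23 F}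
  one_mem' := ⟨0, 0, by simp⟩
  mul_mem' := by
    rintro x y ⟨a, b, hab⟩ ⟨c, d, hcd⟩
    refine ⟨a + c, b + d, ?_⟩
    have h1 : E13 F * E13 F = 0 := by simp [E13, Matrix.single_mul_single_of_ne]
    have h2 : E13 F * E23 F = 0 := by simp [E13, E23, Matrix.single_mul_single_of_ne]
    have h3 : E23 F * E13 F = 0 := by simp [E13, E23, Matrix.single_mul_single_of_ne]
    have h4 : E23 F * E23 F = 0 := by simp [E23, Matrix.single_mul_single_of_ne]
    simp only [Units.val_mul, hab, hcd, mul_add, add_mul, smul_mul_assoc,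
      mul_smul_comm, h1, h2, h3, h4, mul_one, one_mul, smul_zero]
    module
  inv_mem' := by
    rintro x ⟨a, b, hab⟩
    refine ⟨-a, -b, ?_⟩
    have h1 : E13 F * E13 F = 0 := by simp [E13, Matrix.single_mul_single_of_ne]
    have h2 : E13 F * E23 F = 0 := by simp [E13, E23, Matrix.single_mul_single_of_ne]
    have h3 : E23 F * E13 F = 0 := by simp [E13, E23, Matrix.single_mul_single_of_ne]
    have h4 : E23 F * E23 F = 0 := by simp [E23, Matrix.single_mul_single_of_ne]
    have h : ((x : Matrix (Fin 3) (Fin 3) F)) * (1 + (-a) • E13 F + (-b) • E23 F) = 1 := by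
      simp only [hab, mul_add, add_mul, smul_mul_assoc, mul_smul_comm,
        h1, h2, h3, h4, mul_one, one_mul, smul_zero]
      module
    have := Matrix.inv_eq_right_inv h
    simp [this]

/-- The diagonal element `t' = diag(u, v, 1)` of `GL₃(F)`. -/
def T' (u v : Fˣ) : GL (Fin 3) F :=
  Matrix.GeneralLinearGroup.mkOfDetNeZero (Matrix.diagonal ![u, v, 1]) (by
    simp [Matrix.det_diagonal, Fin.prod_univ_three])


section Aux
variable (F : Type*) [Field F]


variable (F : Type*) [Field F]

lemma dmulL (d : Fin 3 → F) (i j : Fin 3) (c : F) :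
    Matrix.diagonal d * Matrix.single i j c = Matrix.single i j (d i * c) := by
  ext a b
  rw [Matrix.diagonal_mul]
  unfold Matrix.single
  by_cases h : i = a <;> simp [h]

lemma dmulR (d : Fin 3 → F) (i j : Fin 3) (c : F) :
    Matrix.single i j c * Matrix.diagonal d = Matrix.single i j (c * d j) := by
  ext a b
  rw [Matrix.mul_diagonal]
  unfold Matrix.single
  by_cases h : j = b <;> simp [h, mul_comm]

/-- diag monoid hom from pairs of units. -/
def dm : Fˣ × Fˣ →* GL (Fin 3) F where
  toFun p :=
    { val := Matrix.diagonal ![(p.1 : F), (p.2 : F), 1]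
      inv := Matrix.diagonal ![((p.1⁻¹ : Fˣ) : F), ((p.2⁻¹ : Fˣ) : F), 1]
      val_inv := by
        ext a b
        fin_cases a <;> fin_cases b <;>
          simp [Matrix.mul_apply, Fin.sum_univ_three, Matrix.diagonal]
      inv_val := by
        ext a b
        fin_cases a <;> fin_cases b <;>
          simp [Matrix.mul_apply, Fin.sum_univ_three, Matrix.diagonal] }
  map_one' := by
    refine Units.ext ?_
    show Matrix.diagonal _ = (1 : Matrix (Fin 3) (Fin 3) F)
    ext a b
    fin_cases a <;> fin_cases b <;> simp [Matrix.diagonal]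
  map_mul' p q := by
    refine Units.ext ?_
    show Matrix.diagonal _ = Matrix.diagonal _ * Matrix.diagonal _
    ext a b
    fin_cases a <;> fin_cases b <;>
      simp [Matrix.mul_apply, Fin.sum_univ_three, Matrix.diagonal]


variable (u v : Fˣ)

lemma T'_eq : T' F u v = dm F (u, v) := Units.ext rfl

lemma Tpow_val (k : ℤ) : (((T' F u v) ^ k : GL (Fin 3) F) : Matrix (Fin 3) (Fin 3) F)
    = Matrix.diagonal ![((u ^ k : Fˣ) : F), ((v ^ k : Fˣ) : F), 1] := by
  rw [T'_eq, ← map_zpow]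
  rfl

lemma conj_mem (p : Fˣ × Fˣ) (w : GL (Fin 3) F) (hw : w ∈ U3' F) :
    dm F p * w * (dm F p)⁻¹ ∈ U3' F := by
  obtain ⟨a, b, hab⟩ := hw
  refine ⟨(p.1 : F) * a, (p.2 : F) * b, ?_⟩
  have h1 : ((dm F p : GL (Fin 3) F) : Matrix (Fin 3) (Fin 3) F)
      = Matrix.diagonal ![(p.1 : F), (p.2 : F), 1] := rfl
  have h2 : (((dm F p)⁻¹ : GL (Fin 3) F) : Matrix (Fin 3) (Fin 3) F)
      = Matrix.diagonal ![((p.1⁻¹ : Fˣ) : F), ((p.2⁻¹ : Fˣ) : F), 1] := by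
    rw [← map_inv]; rfl
  have hdd : Matrix.diagonal ![(p.1 : F), (p.2 : F), 1] *
      Matrix.diagonal ![((p.1⁻¹ : Fˣ) : F), ((p.2⁻¹ : Fˣ) : F), 1] = 1 := by
    rw [← h1, ← h2, ← Units.val_mul, mul_inv_cancel, Units.val_one]
  show ((dm F p * w * (dm F p)⁻¹ : GL (Fin 3) F) : Matrix (Fin 3) (Fin 3) F) = _
  rw [Units.val_mul, Units.val_mul, h1, hab, h2]
  simp only [E13, E23, mul_add, add_mul, Matrix.smul_single, mul_smul_comm,
    smul_mul_assoc, dmulL, dmulR, hdd, one_mul, mul_one, smul_eq_mul]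
  norm_num
  have e : ∀ x y : F, (![x, y, 1] : Fin 3 → F) 2 = 1 := fun _ _ => rfl
  simp only [e, mul_one]


lemma tpow_eq_zero (hu : ¬ IsOfFinOrder u) (k : ℤ) (hk : (T' F u v) ^ k ∈ U3' F) : k = 0 := by
  obtain ⟨a, b, hab⟩ := hk
  rw [Tpow_val] at hab
  have h00 := congrFun (congrFun hab 0) 0
  simp [Matrix.diagonal, E13, E23, Matrix.single, Matrix.one_apply] at h00
  have huk : u ^ k = 1 := Units.ext (by simpa using h00)
  have := orderOf_dvd_iff_zpow_eq_one.mpr huk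
  rw [orderOf_eq_zero_iff.mpr hu] at this
  exact_mod_cast zero_dvd_iff.mp (by exact_mod_cast this)

end Aux

/-- Let `u` have infinite order in `Fˣ`, `t' = diag(u, v, 1)`, and let
`G = ⟨t', U₃'⟩` be the subgroup of `GL₃(F)` generated by `t'` together with `U₃'`.  Then `U₃'`
is a normal subgroup of `G`, and every element of `G` can be written uniquely as `w * t' ^ m`
with `w ∈ U₃'` and `m ∈ ℤ`. -/
theorem semidirect_decomposition (F : Type*) [Field F] (u v : Fˣ)
    (hu : ¬ IsOfFinOrder u) :
    U3' F ≤ Subgroup.closure ({T' F u v} ∪ (U3' F : Set (GL (Fin 3) F))) ∧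
      (∀ g ∈ Subgroup.closure ({T' F u v} ∪ (U3' F : Set (GL (Fin 3) F))),
        ∀ w ∈ U3' F, g * w * g⁻¹ ∈ U3' F) ∧
      ∀ g ∈ Subgroup.closure ({T' F u v} ∪ (U3' F : Set (GL (Fin 3) F))),
        ∃! p : ↥(U3' F) × ℤ, g = (p.1 : GL (Fin 3) F) * (T' F u v) ^ p.2 := by
  set t := T' F u v with ht
  have htm : ∀ k : ℤ, ∀ w ∈ U3' F, t ^ k * w * (t ^ k)⁻¹ ∈ U3' F := by
    intro k w hw
    have hk : t ^ k = dm F ((u, v) ^ k) := by rw [ht, T'_eq, map_zpow]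
    rw [hk]
    exact conj_mem F ((u, v) ^ k) w hw
  have hnorm : Subgroup.closure ({t} ∪ (U3' F : Set (GL (Fin 3) F))) ≤ Subgroup.normalizer (U3' F : Set (GL (Fin 3) F)) := by
    rw [Subgroup.closure_le]
    rintro g (rfl | hg)
    · rw [SetLike.mem_coe, Subgroup.mem_normalizer_iff]
      intro h
      constructor
      · intro hh
        simpa using htm 1 h hh
      · intro hh
        have key := htm (-1) _ hh
        have : t ^ (-1 : ℤ) * (t * h * t⁻¹) * (t ^ (-1 : ℤ))⁻¹ = h := by
          simp only [_root_.zpow_neg_one]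
          group
        rwa [this] at key
    · exact Subgroup.le_normalizer hg
  have hconj : ∀ g ∈ Subgroup.closure ({t} ∪ (U3' F : Set (GL (Fin 3) F))),
      ∀ w ∈ U3' F, g * w * g⁻¹ ∈ U3' F := fun g hg w hw =>
    (Subgroup.mem_normalizer_iff.mp (hnorm hg) w).mp hw
  refine ⟨fun x hx => Subgroup.subset_closure (Or.inr hx), hconj, ?_⟩
  intro g hg
  have hex : ∃ w ∈ U3' F, ∃ m : ℤ, g = w * t ^ m := by
    induction hg using Subgroup.closure_induction with
    | mem x hx =>
      rcases hx with rfl | hx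
      · exact ⟨1, one_mem _, 1, by simp⟩
      · exact ⟨x, hx, 0, by simp⟩
    | one => exact ⟨1, one_mem _, 0, by simp⟩
    | mul x y hx hy ihx ihy =>
      obtain ⟨w, hw, m, rfl⟩ := ihx
      obtain ⟨w', hw', n, rfl⟩ := ihy
      refine ⟨w * (t ^ m * w' * (t ^ m)⁻¹), mul_mem hw (htm m w' hw'), m + n, ?_⟩
      rw [_root_.zpow_add]
      group
    | inv x hx ihx =>
      obtain ⟨w, hw, m, rfl⟩ := ihx
      refine ⟨t ^ (-m) * w⁻¹ * (t ^ (-m))⁻¹, htm (-m) _ (inv_mem hw), -m, ?_⟩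
      group
  obtain ⟨w, hw, m, hgm⟩ := hex
  refine ⟨(⟨w, hw⟩, m), hgm, ?_⟩
  rintro ⟨w', n⟩ hq
  have heq : (w' : GL (Fin 3) F) * t ^ n = w * t ^ m := hq.symm.trans hgm
  have h2 : ((w' : GL (Fin 3) F))⁻¹ * w = t ^ (n - m) := by
    calc ((w' : GL (Fin 3) F))⁻¹ * w
        = ((w' : GL (Fin 3) F))⁻¹ * (w * t ^ m) * (t ^ m)⁻¹ := by group
      _ = ((w' : GL (Fin 3) F))⁻¹ * ((w' : GL (Fin 3) F) * t ^ n) * (t ^ m)⁻¹ := by rw [heq]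
      _ = t ^ (n - m) := by rw [_root_.zpow_sub]; group
  have hmem : t ^ (n - m) ∈ U3' F := h2 ▸ mul_mem (inv_mem w'.2) hw
  have h0 : n - m = 0 := tpow_eq_zero F u v hu _ hmem
  have hone : ((w' : GL (Fin 3) F))⁻¹ * w = 1 := by rw [h2, h0, zpow_zero]
  have hww : (w' : GL (Fin 3) F) = w := inv_mul_eq_one.mp hone
  have hnm : n = m := by omega
  exact Prod.ext (Subtype.ext hww) hnm
end
end

section
/- Let F be a field, u, v ∈ Fˣ, t = diag(u, 1, v⁻¹), t' = diag(u, v, 1) ∈ GL₃(F). Let H = ⟨t, U₃⟩ and G = ⟨t', U₃'⟩ be the subgroups of GL₃(F) generated by t together with U₃, respectively by t' together with U₃', and let Z be the subgroup of matrices 1 + a·E₁₃ with a ∈ F. Then Z is normal in H and the quotient group H/Z is isomorphic to G. -/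
open Matrix

noncomputable section

variable (F : Type*) [Field F]

/-- Upper unitriangular `3 × 3` matrices. -/
def IsUnitriangular (A : Matrix (Fin 3) (Fin 3) F) : Prop :=
  A 0 0 = 1 ∧ A 1 1 = 1 ∧ A 2 2 = 1 ∧ A 1 0 = 0 ∧ A 2 0 = 0 ∧ A 2 1 = 0

/-- The subgroup `U₃ ≤ GL₃(F)` of upper unitriangular matrices. -/
def U3 : Subgroup (GL (Fin 3) F) where
  carrier := {g | IsUnitriangular F (g : Matrix (Fin 3) (Fin 3) F)}
  one_mem' := by
    constructor <;> simp [IsUnitriangular]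
  mul_mem' := by
    rintro a b ⟨ha1, ha2, ha3, ha4, ha5, ha6⟩ ⟨hb1, hb2, hb3, hb4, hb5, hb6⟩
    refine ⟨?_, ?_, ?_, ?_, ?_, ?_⟩ <;>
      simp [Units.val_mul, Matrix.mul_apply, Fin.sum_univ_three,
        ha1, ha2, ha3, ha4, ha5, ha6, hb1, hb2, hb3, hb4, hb5, hb6]
  inv_mem' := by
    rintro g ⟨h1, h2, h3, h4, h5, h6⟩
    set A : Matrix (Fin 3) (Fin 3) F := (g : Matrix (Fin 3) (Fin 3) F) with hA
    have hinv : A⁻¹ = !![1, -(A 0 1), A 0 1 * A 1 2 - A 0 2; 0, 1, -(A 1 2); 0, 0, 1] := by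
      apply Matrix.inv_eq_right_inv
      ext i j
      fin_cases i <;> fin_cases j <;>
        simp [Matrix.mul_apply, Fin.sum_univ_three, Matrix.vecHead, Matrix.vecTail, h1, h2, h3, h4, h5, h6] <;> ring_nf
    have : ((g⁻¹ : GL (Fin 3) F) : Matrix (Fin 3) (Fin 3) F) = A⁻¹ := by
      simp [hA]
    refine ⟨?_, ?_, ?_, ?_, ?_, ?_⟩ <;> simp [this, hinv, Matrix.vecHead, Matrix.vecTail]

/-- The subgroup `Z ≤ GL₃(F)` of matrices `1 + a • E₁₃`, `a ∈ F` (the centre of `U₃`). -/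
def ZU3 : Subgroup (GL (Fin 3) F) where
  carrier := {g | ∃ a : F, (g : Matrix (Fin 3) (Fin 3) F) = 1 + a • E13 F}
  one_mem' := ⟨0, by simp⟩
  mul_mem' := by
    rintro x y ⟨a, ha⟩ ⟨b, hb⟩
    refine ⟨a + b, ?_⟩
    have : E13 F * E13 F = 0 := by
      simp [E13, Matrix.single_mul_single_of_ne]
    simp only [Units.val_mul, ha, hb, mul_add, add_mul, smul_mul_assoc,
      mul_smul_comm, this, mul_one, one_mul, smul_zero]
    module
  inv_mem' := by
    rintro x ⟨a, ha⟩
    refine ⟨-a, ?_⟩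
    have h : ((x : Matrix (Fin 3) (Fin 3) F)) * (1 + (-a) • E13 F) = 1 := by
      have : E13 F * E13 F = 0 := by
        simp [E13, Matrix.single_mul_single_of_ne]
      simp only [ha, mul_add, add_mul, smul_mul_assoc, mul_smul_comm, this,
        mul_one, one_mul, smul_zero]
      module
    have := Matrix.inv_eq_right_inv h
    simp [this]

/-- The diagonal element `t = diag(u, 1, v⁻¹)` of `GL₃(F)`. -/
def T (u v : Fˣ) : GL (Fin 3) F :=
  Matrix.GeneralLinearGroup.mkOfDetNeZero (Matrix.diagonal ![u, 1, (v⁻¹ : Fˣ)]) (by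
    simp [Matrix.det_diagonal, Fin.prod_univ_three])

namespace Stmt10Aux

/-- Membership predicate for the auxiliary group `P`. -/
def Pmem (A : Matrix (Fin 3) (Fin 3) F) : Prop :=
  A 1 0 = 0 ∧ A 2 0 = 0 ∧ A 2 1 = 0 ∧ A 1 1 = 1

lemma det_of_Pmem {A : Matrix (Fin 3) (Fin 3) F} (h : Pmem F A) :
    A.det = A 0 0 * A 2 2 := by
  rw [Matrix.det_fin_three, h.1, h.2.1, h.2.2.1, h.2.2.2]; ring

lemma entries_ne_zero {g : GL (Fin 3) F}
    (h : Pmem F (g : Matrix (Fin 3) (Fin 3) F)) :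
    (g : Matrix (Fin 3) (Fin 3) F) 0 0 ≠ 0 ∧ (g : Matrix (Fin 3) (Fin 3) F) 2 2 ≠ 0 := by
  have hd : ((g : Matrix (Fin 3) (Fin 3) F)).det ≠ 0 := by
    have : IsUnit ((g : Matrix (Fin 3) (Fin 3) F)).det :=
      (Matrix.isUnit_iff_isUnit_det _).mp g.isUnit
    exact this.ne_zero
  rw [det_of_Pmem F h] at hd
  exact ⟨left_ne_zero_of_mul hd, right_ne_zero_of_mul hd⟩

/-- The auxiliary subgroup `P` of matrices `[[a,x,y],[0,1,z],[0,0,c]]`. -/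
def P : Subgroup (GL (Fin 3) F) where
  carrier := {g | Pmem F (g : Matrix (Fin 3) (Fin 3) F)}
  one_mem' := by refine ⟨?_, ?_, ?_, ?_⟩ <;> simp
  mul_mem' := by
    rintro a b ⟨ha1, ha2, ha3, ha4⟩ ⟨hb1, hb2, hb3, hb4⟩
    refine ⟨?_, ?_, ?_, ?_⟩ <;>
      simp [Units.val_mul, Matrix.mul_apply, Fin.sum_univ_three,
        ha1, ha2, ha3, ha4, hb1, hb2, hb3, hb4]
  inv_mem' := by
    rintro g hg
    obtain ⟨h1, h2, h3, h4⟩ := hg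
    obtain ⟨ha, hc⟩ := entries_ne_zero F ⟨h1, h2, h3, h4⟩
    set A : Matrix (Fin 3) (Fin 3) F := (g : Matrix (Fin 3) (Fin 3) F) with hA
    have hinv : A⁻¹ = !![(A 0 0)⁻¹, -((A 0 0)⁻¹ * A 0 1),
        (A 0 0)⁻¹ * (A 0 1 * A 1 2 - A 0 2) * (A 2 2)⁻¹;
        0, 1, -(A 1 2 * (A 2 2)⁻¹); 0, 0, (A 2 2)⁻¹] := by
      apply Matrix.inv_eq_right_inv
      ext i j
      fin_cases i <;> fin_cases j <;>
        (try simp [Matrix.mul_apply, Fin.sum_univ_three, Matrix.vecHead, Matrix.vecTail,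
          Function.comp, h1, h2, h3, h4]) <;> (try field_simp) <;> (try ring)
    have hcoe : ((g⁻¹ : GL (Fin 3) F) : Matrix (Fin 3) (Fin 3) F) = A⁻¹ := by
      simp [hA]
    refine ⟨?_, ?_, ?_, ?_⟩ <;> simp [hcoe, hinv, Matrix.vecHead, Matrix.vecTail]

/-- The underlying matrix of `φ`. -/
def phiMat (A : Matrix (Fin 3) (Fin 3) F) : Matrix (Fin 3) (Fin 3) F :=
  !![A 0 0, 0, A 0 1; 0, (A 2 2)⁻¹, (A 2 2)⁻¹ * A 1 2; 0, 0, 1]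

lemma det_phiMat (A : Matrix (Fin 3) (Fin 3) F) :
    (phiMat F A).det = A 0 0 * (A 2 2)⁻¹ := by
  rw [Matrix.det_fin_three]; simp [phiMat, Matrix.vecHead, Matrix.vecTail]

/-- The homomorphism `φ : P → GL₃(F)`, `[[a,x,y],[0,1,z],[0,0,c]] ↦ [[a,0,x],[0,c⁻¹,c⁻¹z],[0,0,1]]`. -/
def phi : (P F) →* GL (Fin 3) F where
  toFun p := Matrix.GeneralLinearGroup.mkOfDetNeZero
      (phiMat F ((p : GL (Fin 3) F) : Matrix (Fin 3) (Fin 3) F)) (by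
    rw [det_phiMat]
    obtain ⟨ha, hc⟩ := entries_ne_zero F p.2
    exact mul_ne_zero ha (inv_ne_zero hc))
  map_one' := by
    apply Units.ext
    show phiMat F _ = _
    ext i j
    fin_cases i <;> fin_cases j <;> simp [phiMat, Matrix.vecHead, Matrix.vecTail]
  map_mul' := by
    intro p q
    apply Units.ext
    show phiMat F _ = phiMat F _ * phiMat F _
    obtain ⟨ha1, ha2, ha3, ha4⟩ := p.2
    obtain ⟨hb1, hb2, hb3, hb4⟩ := q.2
    obtain ⟨ha, hc⟩ := entries_ne_zero F p.2
    obtain ⟨hb, hd⟩ := entries_ne_zero F q.2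
    ext i j
    fin_cases i <;> fin_cases j <;>
      (try simp [phiMat, Units.val_mul, Matrix.mul_apply, Fin.sum_univ_three,
        Matrix.vecHead, Matrix.vecTail, Function.comp,
        ha1, ha2, ha3, ha4, hb1, hb2, hb3, hb4, mul_inv]) <;>
      (try field_simp) <;> (try ring)

lemma U3_le_P {g : GL (Fin 3) F} (hg : g ∈ U3 F) : g ∈ P F :=
  ⟨hg.2.2.2.1, hg.2.2.2.2.1, hg.2.2.2.2.2, hg.2.1⟩

lemma T_val (u v : Fˣ) :
    ((T F u v : GL (Fin 3) F) : Matrix (Fin 3) (Fin 3) F)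
      = Matrix.diagonal ![(u : F), 1, ((v⁻¹ : Fˣ) : F)] := rfl

lemma T'_val (u v : Fˣ) :
    ((T' F u v : GL (Fin 3) F) : Matrix (Fin 3) (Fin 3) F)
      = Matrix.diagonal ![(u : F), (v : F), 1] := rfl

lemma T_mem_P (u v : Fˣ) : T F u v ∈ P F := by
  refine ⟨?_, ?_, ?_, ?_⟩ <;>
    simp [T_val, Matrix.diagonal_apply, Matrix.vecHead, Matrix.vecTail]

lemma phi_T (u v : Fˣ) (h : T F u v ∈ P F) : phi F ⟨T F u v, h⟩ = T' F u v := by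
  apply Units.ext
  show phiMat F _ = _
  rw [T'_val]
  ext i j
  fin_cases i <;> fin_cases j <;>
    simp [phiMat, T_val, Matrix.diagonal_apply, Matrix.vecHead, Matrix.vecTail]

lemma phi_mem_U3' {g : GL (Fin 3) F} (hg : g ∈ U3 F) (h : g ∈ P F) :
    phi F ⟨g, h⟩ ∈ U3' F := by
  obtain ⟨h1, h2, h3, h4, h5, h6⟩ := hg
  refine ⟨(g : Matrix (Fin 3) (Fin 3) F) 0 1, (g : Matrix (Fin 3) (Fin 3) F) 1 2, ?_⟩
  show phiMat F _ = _
  ext i j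
  fin_cases i <;> fin_cases j <;>
    simp [phiMat, E13, E23, Matrix.single, Matrix.one_apply,
      Matrix.vecHead, Matrix.vecTail, h1, h2, h3, h4, h5, h6]

lemma exists_preimage {g : GL (Fin 3) F} (hg : g ∈ U3' F) :
    ∃ (x : GL (Fin 3) F) (hx : x ∈ U3 F), phi F ⟨x, U3_le_P F hx⟩ = g := by
  obtain ⟨a, b, hab⟩ := hg
  refine ⟨Matrix.GeneralLinearGroup.mkOfDetNeZero !![1, a, 0; 0, 1, b; 0, 0, 1] (by
    rw [Matrix.det_fin_three]
    simp [Matrix.vecHead, Matrix.vecTail]), ?_, ?_⟩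
  · refine ⟨?_, ?_, ?_, ?_, ?_, ?_⟩ <;>
      simp [Matrix.GeneralLinearGroup.mkOfDetNeZero, Matrix.GeneralLinearGroup.mk',
        Matrix.unitOfDetInvertible, Matrix.vecHead, Matrix.vecTail]
  · apply Units.ext
    show phiMat F _ = _
    rw [hab]
    ext i j
    fin_cases i <;> fin_cases j <;>
      simp [phiMat, E13, E23, Matrix.single, Matrix.one_apply,
        Matrix.GeneralLinearGroup.mkOfDetNeZero, Matrix.GeneralLinearGroup.mk',
        Matrix.unitOfDetInvertible, Matrix.vecHead, Matrix.vecTail]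

lemma phi_eq_one_iff {g : GL (Fin 3) F} (hg : g ∈ P F) :
    phi F ⟨g, hg⟩ = 1 ↔ g ∈ ZU3 F := by
  obtain ⟨h1, h2, h3, h4⟩ := hg
  constructor
  · intro h
    have hm : phiMat F (g : Matrix (Fin 3) (Fin 3) F) = 1 := congrArg Units.val h
    have e00 : (g : Matrix (Fin 3) (Fin 3) F) 0 0 = 1 := by
      have := congrFun (congrFun hm 0) 0
      simpa [phiMat, Matrix.one_apply] using this
    have e01 : (g : Matrix (Fin 3) (Fin 3) F) 0 1 = 0 := by
      have := congrFun (congrFun hm 0) 2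
      simpa [phiMat, Matrix.one_apply] using this
    have e22 : (g : Matrix (Fin 3) (Fin 3) F) 2 2 = 1 := by
      have := congrFun (congrFun hm 1) 1
      simp [phiMat, Matrix.one_apply, Matrix.vecHead, Matrix.vecTail, inv_eq_one] at this
      exact this
    have e12 : (g : Matrix (Fin 3) (Fin 3) F) 1 2 = 0 := by
      have := congrFun (congrFun hm 1) 2
      simp [phiMat, Matrix.one_apply, Matrix.vecHead, Matrix.vecTail, e22] at this
      exact this
    refine ⟨(g : Matrix (Fin 3) (Fin 3) F) 0 2, ?_⟩
    ext i j
    fin_cases i <;> fin_cases j <;>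
      simp [E13, Matrix.single, Matrix.one_apply,
        e00, e01, e22, e12, h1, h2, h3, h4]
  · rintro ⟨a, ha⟩
    apply Units.ext
    show phiMat F _ = _
    rw [ha]
    ext i j
    fin_cases i <;> fin_cases j <;>
      simp [phiMat, E13, Matrix.single, Matrix.one_apply,
        Matrix.vecHead, Matrix.vecTail]

lemma ZU3_le_U3 {g : GL (Fin 3) F} (hg : g ∈ ZU3 F) : g ∈ U3 F := by
  obtain ⟨a, ha⟩ := hg
  refine ⟨?_, ?_, ?_, ?_, ?_, ?_⟩ <;>
    simp [ha, E13, Matrix.single, Matrix.one_apply]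

end Stmt10Aux

/-- Let `t = diag(u, 1, v⁻¹)`, `t' = diag(u, v, 1)`,
`H = ⟨t, U₃⟩`, `G = ⟨t', U₃'⟩`, and `Z` the subgroup of matrices `1 + a • E₁₃`.  Then `Z` is
normal in `H` and the quotient group `H/Z` is isomorphic to `G`. -/
theorem quotient_iso (F : Type*) [Field F] (u v : Fˣ) :
    ZU3 F ≤ Subgroup.closure ({T F u v} ∪ (U3 F : Set (GL (Fin 3) F))) ∧
      ∃ _ : ((ZU3 F).subgroupOf
          (Subgroup.closure ({T F u v} ∪ (U3 F : Set (GL (Fin 3) F))))).Normal,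
        Nonempty
          ((↥(Subgroup.closure ({T F u v} ∪ (U3 F : Set (GL (Fin 3) F)))) ⧸
              (ZU3 F).subgroupOf
                (Subgroup.closure ({T F u v} ∪ (U3 F : Set (GL (Fin 3) F))))) ≃*
            ↥(Subgroup.closure ({T' F u v} ∪ (U3' F : Set (GL (Fin 3) F))))) := by
  classical
  open Stmt10Aux in
  set S : Set (GL (Fin 3) F) := {T F u v} ∪ (U3 F : Set (GL (Fin 3) F)) with hS
  set H : Subgroup (GL (Fin 3) F) := Subgroup.closure S with hH
  set G' : Subgroup (GL (Fin 3) F) :=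
    Subgroup.closure ({T' F u v} ∪ (U3' F : Set (GL (Fin 3) F))) with hG'
  have hHP : H ≤ Stmt10Aux.P F := by
    rw [hH]
    apply (Subgroup.closure_le _).mpr
    rintro g hg
    rcases hg with hg | hg
    · rw [Set.mem_singleton_iff] at hg; subst hg; exact Stmt10Aux.T_mem_P F u v
    · exact Stmt10Aux.U3_le_P F hg
  have hZH : ZU3 F ≤ H := by
    intro g hg
    exact Subgroup.subset_closure (Or.inr (Stmt10Aux.ZU3_le_U3 F hg))
  set φH : H →* GL (Fin 3) F :=
    (Stmt10Aux.phi F).comp (Subgroup.inclusion hHP) with hφH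
  have hker : φH.ker = (ZU3 F).subgroupOf H := by
    ext g
    rw [MonoidHom.mem_ker, Subgroup.mem_subgroupOf]
    exact Stmt10Aux.phi_eq_one_iff F (hHP g.2)
  have key : ∀ g : GL (Fin 3) F, g ∈ H → ∀ hgP : g ∈ Stmt10Aux.P F,
      Stmt10Aux.phi F ⟨g, hgP⟩ ∈ G' := by
    intro g hg
    induction hg using Subgroup.closure_induction with
    | mem x hx =>
        intro hP
        rcases hx with hx | hx
        · rw [Set.mem_singleton_iff] at hx; subst hx
          rw [Stmt10Aux.phi_T F u v hP]
          exact Subgroup.subset_closure (Or.inl rfl)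
        · exact Subgroup.subset_closure (Or.inr (Stmt10Aux.phi_mem_U3' F hx hP))
    | one =>
        intro hP
        have h1 : (⟨1, hP⟩ : Stmt10Aux.P F) = 1 := rfl
        rw [h1, _root_.map_one]; exact one_mem _
    | mul x y hx hy ihx ihy =>
        intro hP
        have hm : (⟨x * y, hP⟩ : Stmt10Aux.P F) = ⟨x, hHP hx⟩ * ⟨y, hHP hy⟩ := rfl
        rw [hm, _root_.map_mul]
        exact mul_mem (ihx _) (ihy _)
    | inv x hx ih =>
        intro hP
        have hi : (⟨x⁻¹, hP⟩ : Stmt10Aux.P F) = (⟨x, hHP hx⟩ : Stmt10Aux.P F)⁻¹ := rfl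
        rw [hi, _root_.map_inv]
        exact inv_mem (ih _)
  have hrange : φH.range = G' := by
    apply le_antisymm
    · rintro x ⟨g, rfl⟩
      exact key g.1 g.2 (hHP g.2)
    · rw [hG']
      apply (Subgroup.closure_le _).mpr
      rintro g hg
      rcases hg with hg | hg
      · rw [Set.mem_singleton_iff] at hg; subst hg
        exact ⟨⟨T F u v, Subgroup.subset_closure (Or.inl rfl)⟩,
          Stmt10Aux.phi_T F u v _⟩
      · obtain ⟨x, hx, hphi⟩ := Stmt10Aux.exists_preimage F hg
        exact ⟨⟨x, Subgroup.subset_closure (Or.inr hx)⟩, hphi⟩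
  haveI hnormal : ((ZU3 F).subgroupOf H).Normal := hker ▸ φH.normal_ker
  refine ⟨hZH, hnormal, ⟨?_⟩⟩
  exact (QuotientGroup.quotientMulEquivOfEq hker.symm).trans
    ((QuotientGroup.quotientKerEquivRange φH).trans (MulEquiv.subgroupCongr hrange))
end
end

section
/- Let k be a field, n ≥ 1, and let R = k[[s₀,…,s_{n−1}, t₀,…,t_{n−1}]] be the ring of formal power series over k in 2n variables. For integers a, b ≥ 2, the element s₀·t₀ does not lie in the ideal (s₀ᵃ,…,s_{n−1}ᵃ)·(t₀,…,t_{n−1}) + (s₀,…,s_{n−1})·(t₀ᵇ,…,t_{n−1}ᵇ) of R, where · denotes the product of ideals. -/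
open MvPowerSeries Finsupp Pointwise

/-- Let `k` be a field, `n ≥ 1`, and let
`R = k[[s₀,…,s_{n−1}, t₀,…,t_{n−1}]]` be the ring of formal power series over `k` in `2n`
variables.  For integers `a, b ≥ 2`, the element `s₀ * t₀` does not lie in the ideal
`(s₀ᵃ,…,s_{n−1}ᵃ)·(t₀,…,t_{n−1}) + (s₀,…,s_{n−1})·(t₀ᵇ,…,t_{n−1}ᵇ)` of `R`. -/
theorem st_not_mem_ideal (k : Type*) [Field k] (n : ℕ) (hn : 1 ≤ n)
    (a b : ℕ) (ha : 2 ≤ a) (hb : 2 ≤ b) :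
    letI R := MvPowerSeries (Fin n ⊕ Fin n) k
    letI s : Fin n → R := fun i => MvPowerSeries.X (Sum.inl i)
    letI t : Fin n → R := fun i => MvPowerSeries.X (Sum.inr i)
    s ⟨0, hn⟩ * t ⟨0, hn⟩ ∉
      Ideal.span (Set.range fun i => s i ^ a) * Ideal.span (Set.range t) +
        Ideal.span (Set.range s) * Ideal.span (Set.range fun i => t i ^ b) := by
  classical
  intro h
  set σ := Fin n ⊕ Fin n
  set m : σ →₀ ℕ := Finsupp.single (Sum.inl (⟨0,hn⟩ : Fin n)) 1
    + Finsupp.single (Sum.inr (⟨0,hn⟩ : Fin n)) 1 with hm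
  -- key: every element g of either generating set is a monomial X^e with ¬ e ≤ m
  have key : ∀ g ∈ (Set.range fun i => (MvPowerSeries.X (Sum.inl i) : MvPowerSeries σ k) ^ a) *
      (Set.range fun i => (MvPowerSeries.X (Sum.inr i) : MvPowerSeries σ k)) ∪
      (Set.range fun i => (MvPowerSeries.X (Sum.inl i) : MvPowerSeries σ k)) *
      (Set.range fun i => (MvPowerSeries.X (Sum.inr i) : MvPowerSeries σ k) ^ b),
      ∀ r : MvPowerSeries σ k, MvPowerSeries.coeff m (r * g) = 0 := by
    rintro g (⟨_, ⟨i, rfl⟩, _, ⟨j, rfl⟩, rfl⟩ | ⟨_, ⟨i, rfl⟩, _, ⟨j, rfl⟩, rfl⟩) r <;> beta_reduce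
    · rw [X_pow_eq, MvPowerSeries.X, monomial_mul_monomial, coeff_mul_monomial, if_neg]
      intro hle
      have := hle (Sum.inl i)
      simp [hm, Finsupp.single_apply] at this
      split_ifs at this <;> omega
    · rw [X_pow_eq, MvPowerSeries.X, monomial_mul_monomial, coeff_mul_monomial, if_neg]
      intro hle
      have := hle (Sum.inr j)
      simp [hm, Finsupp.single_apply] at this
      split_ifs at this <;> omega
  rw [Ideal.span_mul_span', Ideal.span_mul_span', Ideal.add_eq_sup, ← Ideal.span_union] at h
  rw [Ideal.span, Submodule.mem_span_set] at h
  obtain ⟨c, hsupp, hsum⟩ := h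
  have hzero : MvPowerSeries.coeff m
      (MvPowerSeries.X (Sum.inl (⟨0,hn⟩:Fin n)) * MvPowerSeries.X (Sum.inr (⟨0,hn⟩:Fin n))
        : MvPowerSeries σ k) = 0 := by
    rw [← hsum, Finsupp.sum, map_sum]
    refine Finset.sum_eq_zero fun g hg => ?_
    exact key g (hsupp hg) (c g)
  rw [MvPowerSeries.X, MvPowerSeries.X, monomial_mul_monomial, ← hm,
    coeff_monomial_same] at hzero
  rw [one_mul] at hzero; exact (one_ne_zero : (1:k) ≠ 0) hzero
end
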